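/- In any square group M, the cross-effect (-|-)_H : M_e × M_e → M_ee descends to a well-defined biadditive map Coker(P) ⊗ Coker(P) → M_ee, and the homomorphism Δ(x) = HPH(x) - 2H(x) + (x|x)_H descends to a homomorphism Coker(P) → Ker(P) ⊆ M_ee. -/

import Mathlib

/-- Cross-effect of a map `H` into an abelian group: `(x|y)_H = H(x+y) - H x - H y`. -/
def crossEff {Me : Type*} [AddGroup Me] {Mee : Type*} [AddCommGroup Mee]
    (H : Me → Mee) (x y : Me) : Mee :=
  H (x + y) - H x - H y

/-- The axioms of a square group `M_e --H--> M_ee --P--> M_e`: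
`M_ee` abelian, `P` a homomorphism, `H` quadratic (bilinear cross-effect), and
`(Pa|y)_H = 0 = (x|Pb)_H`, `P (x|y)_H = -x-y+x+y`, `PHP = 2P`. -/
structure IsSquareGroup {Me : Type*} [AddGroup Me] {Mee : Type*} [AddCommGroup Mee]
    (P : Mee →+ Me) (H : Me → Mee) : Prop where
  cross_add_left : ∀ x x' y : Me, crossEff H (x + x') y = crossEff H x y + crossEff H x' y
  cross_add_right : ∀ x y y' : Me, crossEff H x (y + y') = crossEff H x y + crossEff H x y'
  cross_P_left : ∀ (a : Mee) (y : Me), crossEff H (P a) y = 0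
  cross_P_right : ∀ (x : Me) (b : Mee), crossEff H x (P b) = 0
  P_cross : ∀ x y : Me, P (crossEff H x y) = -x - y + x + y
  PHP : ∀ a : Mee, P (H (P a)) = P a + P a

/-- In any square group, the cross-effect descends to a biadditive map on `Coker(P)`
(i.e. it is invariant under translating either argument by elements of the image of `P`),
and `Δ(x) = HPH(x) - 2H(x) + (x|x)_H` descends to a homomorphism `Coker(P) → Ker(P)`. -/
theorem squareGroup_descend_cokernel {Me : Type*} [AddGroup Me] {Mee : Type*} [AddCommGroup Mee]
    (P : Mee →+ Me) (H : Me → Mee) (hsq : IsSquareGroup P H)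
    (Δ : Me → Mee) (hΔ : ∀ x, Δ x = H (P (H x)) - 2 • H x + crossEff H x x) :
    (∀ (x y : Me) (a : Mee), crossEff H (x + P a) y = crossEff H x y) ∧
    (∀ (x y : Me) (b : Mee), crossEff H x (y + P b) = crossEff H x y) ∧
    (∀ x y : Me, Δ (x + y) = Δ x + Δ y) ∧
    (∀ (x : Me) (a : Mee), Δ (x + P a) = Δ x) ∧
    (∀ x : Me, P (Δ x) = 0) := by
  -- basic expansion of H on sums
  have hadd : ∀ x y : Me, H (x + y) = H x + H y + crossEff H x y := by
    intro x y; unfold crossEff; abel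
  have cz_left : ∀ y : Me, crossEff H 0 y = 0 := by
    intro y
    have h := hsq.cross_add_left 0 0 y
    rw [add_zero] at h
    exact left_eq_add.mp h
  have cz_right : ∀ x : Me, crossEff H x 0 = 0 := by
    intro x
    have h := hsq.cross_add_right x 0 0
    rw [add_zero] at h
    exact left_eq_add.mp h
  have h0 : H 0 = 0 := by
    have h := cz_left 0
    simpa [crossEff] using h
  have cneg_left : ∀ x y : Me, crossEff H (-x) y = -crossEff H x y := by
    intro x y
    have h := hsq.cross_add_left x (-x) y
    rw [add_neg_cancel, cz_left] at h
    exact (neg_eq_of_add_eq_zero_right h.symm).symm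
  -- H of a negative
  have hneg : ∀ x : Me, H (-x) = crossEff H x x - H x := by
    intro x
    have h := hadd x (-x)
    rw [add_neg_cancel, h0] at h
    have h2 : crossEff H x (-x) = -crossEff H x x := by
      have h3 := hsq.cross_add_right x x (-x)
      rw [add_neg_cancel, cz_right] at h3
      exact (neg_eq_of_add_eq_zero_right h3.symm).symm
    rw [h2] at h
    have h' : H x + H (-x) - crossEff H x x = 0 := by
      rw [sub_eq_add_neg]; exact h.symm
    rw [eq_sub_iff_add_eq, add_comm]
    exact sub_eq_zero.mp h'
  -- H is additive on the image of P
  have hPP : ∀ a b : Mee, H (P a + P b) = H (P a) + H (P b) := by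
    intro a b
    rw [hadd, hsq.cross_P_left, add_zero]
  -- the key identity : H(P (x|y)) = (x|y) - (y|x)
  have key : ∀ x y : Me, H (P (crossEff H x y)) = crossEff H x y - crossEff H y x := by
    intro x y
    have e : P (crossEff H x y) = -(y + x) + (x + y) := by
      rw [hsq.P_cross]
      simp [neg_add, sub_eq_add_neg, add_assoc]
    rw [e, hadd (-(y+x)) (x+y), hneg (y+x), cneg_left]
    rw [hadd y x, hsq.cross_add_left y x (y + x), hsq.cross_add_right y y x,
        hsq.cross_add_right x y x, hsq.cross_add_left y x (x + y),
        hsq.cross_add_right y x y, hsq.cross_add_right x x y, hadd x y]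
    abel
  refine ⟨?_, ?_, ?_, ?_, ?_⟩
  · intro x y a
    rw [hsq.cross_add_left, hsq.cross_P_left, add_zero]
  · intro x y b
    rw [hsq.cross_add_right, hsq.cross_P_right, add_zero]
  · intro x y
    rw [hΔ, hΔ, hΔ]
    rw [hadd x y]
    rw [show P (H x + H y + crossEff H x y)
        = P (H x) + P (H y) + P (crossEff H x y) from by simp]
    rw [show P (H x) + P (H y) + P (crossEff H x y)
        = P (H x + H y) + P (crossEff H x y) from by simp]
    rw [hPP (H x + H y) (crossEff H x y)]
    rw [show P (H x + H y) = P (H x) + P (H y) from by simp]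
    rw [hPP (H x) (H y), key x y]
    rw [hsq.cross_add_left x y (x + y), hsq.cross_add_right x x y,
        hsq.cross_add_right y x y]
    abel
  · intro x a
    rw [hΔ, hΔ]
    rw [hadd x (P a), hsq.cross_P_right, add_zero]
    rw [show P (H x + H (P a)) = P (H x) + P (H (P a)) from by simp]
    rw [hsq.PHP a]
    rw [show P (H x) + (P a + P a) = P (H x) + P (a + a) from by simp]
    rw [hPP (H x) (a + a)]
    rw [show P (a + a) = P a + P a from by simp, hPP a a]
    rw [hsq.cross_add_left x (P a) (x + P a), hsq.cross_P_left,
        hsq.cross_add_right x x (P a), hsq.cross_P_right]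
    abel
  · intro x
    rw [hΔ]
    rw [map_add, map_sub, hsq.PHP (H x), hsq.P_cross, map_nsmul, two_nsmul]
    simp [sub_eq_add_neg, add_assoc]
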